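/- The formal system ATM proves the sentence ¬A[L₂] → A[⊥̇]; that is, ATM proves that if the assertible liar sentence is not assertible then the falsum sentence is assertible. -/

import Mathlib

namespace ATM

/-- Terms of ATM: built from ⊥̇ and constants L₁, L₂, … by the dotted
connectives ∧̇, ∨̇, →̇ and the dotted predicates Ȧ[·], Ṫ[·], Ṁ[·]. -/
inductive Term : Type
  | bot  : Term
  | L    : ℕ → Term
  | and  : Term → Term → Term
  | or   : Term → Term → Term
  | imp  : Term → Term → Term
  | A    : Term → Term
  | T    : Term → Term
  | M    : Term → Term

/-- Sentences of ATM: built from ⊥, A[t], T[t], M[t] by ∧, ∨, →. -/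
inductive Sentence : Type
  | bot  : Sentence
  | A    : Term → Sentence
  | T    : Term → Sentence
  | M    : Term → Sentence
  | and  : Sentence → Sentence → Sentence
  | or   : Sentence → Sentence → Sentence
  | imp  : Sentence → Sentence → Sentence

/-- ¬̇t abbreviates t →̇ ⊥̇. -/
def Term.neg (t : Term) : Term := Term.imp t Term.bot

/-- s ↔̇ t abbreviates (s →̇ t) ∧̇ (t →̇ s). -/
def Term.iff (s t : Term) : Term := Term.and (Term.imp s t) (Term.imp t s)

/-- ¬φ abbreviates φ → ⊥. -/
def Sentence.neg (φ : Sentence) : Sentence := Sentence.imp φ Sentence.bot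

/-- φ ↔ ψ abbreviates (φ → ψ) ∧ (ψ → φ). -/
def Sentence.iff (φ ψ : Sentence) : Sentence :=
  Sentence.and (Sentence.imp φ ψ) (Sentence.imp ψ φ)

/-- The canonical term φ̇ of a sentence φ, obtained by dotting every symbol. -/
def Sentence.dot : Sentence → Term
  | Sentence.bot     => Term.bot
  | Sentence.A t     => Term.A t
  | Sentence.T t     => Term.T t
  | Sentence.M t     => Term.M t
  | Sentence.and φ ψ => Term.and φ.dot ψ.dot
  | Sentence.or φ ψ  => Term.or φ.dot ψ.dot
  | Sentence.imp φ ψ => Term.imp φ.dot ψ.dot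

/-- Evaluation t̂ of a term t to a sentence, relative to an assignment
θ of a sentence θᵢ to each constant Lᵢ.  (The θᵢ may be chosen in any
manner; the theorems below hypothesize θ₁ = ¬T[L₁] and θ₂ = ¬A[L₂].) -/
def Term.eval (θ : ℕ → Sentence) : Term → Sentence
  | Term.bot     => Sentence.bot
  | Term.L i     => θ i
  | Term.A t     => Sentence.A t
  | Term.T t     => Sentence.T t
  | Term.M t     => Sentence.M t
  | Term.and s t => Sentence.and (s.eval θ) (t.eval θ)
  | Term.or s t  => Sentence.or (s.eval θ) (t.eval θ)
  | Term.imp s t => Sentence.imp (s.eval θ) (t.eval θ)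

/-- Grounded sentences: the smallest set of sentences containing ⊥, all A[t]
and all M[t], closed under ∧, ∨, →, and containing T[t] whenever t̂ is in
the set. -/
inductive Grounded (θ : ℕ → Sentence) : Sentence → Prop
  | bot : Grounded θ Sentence.bot
  | A (t : Term) : Grounded θ (Sentence.A t)
  | M (t : Term) : Grounded θ (Sentence.M t)
  | and {φ ψ : Sentence} : Grounded θ φ → Grounded θ ψ → Grounded θ (Sentence.and φ ψ)
  | or {φ ψ : Sentence} : Grounded θ φ → Grounded θ ψ → Grounded θ (Sentence.or φ ψ)
  | imp {φ ψ : Sentence} : Grounded θ φ → Grounded θ ψ → Grounded θ (Sentence.imp φ ψ)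
  | T {t : Term} : Grounded θ (t.eval θ) → Grounded θ (Sentence.T t)

/-- `HilbertAxT s t u a` : the term `a` is the instance `Ȧ(s,t,u)` at the
terms `s`, `t`, `u` of one of the axiom schemes `A` of a fixed standard
Hilbert-style axiomatization of intuitionistic propositional logic. -/
inductive HilbertAxT : Term → Term → Term → Term → Prop
  | imp1 (s t u : Term) : HilbertAxT s t u (Term.imp s (Term.imp t s))
  | imp2 (s t u : Term) : HilbertAxT s t u
      (Term.imp (Term.imp s (Term.imp t u))
        (Term.imp (Term.imp s t) (Term.imp s u)))
  | andE1 (s t u : Term) : HilbertAxT s t u (Term.imp (Term.and s t) s)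
  | andE2 (s t u : Term) : HilbertAxT s t u (Term.imp (Term.and s t) t)
  | andI (s t u : Term) : HilbertAxT s t u (Term.imp s (Term.imp t (Term.and s t)))
  | orI1 (s t u : Term) : HilbertAxT s t u (Term.imp s (Term.or s t))
  | orI2 (s t u : Term) : HilbertAxT s t u (Term.imp t (Term.or s t))
  | orE (s t u : Term) : HilbertAxT s t u
      (Term.imp (Term.imp s u)
        (Term.imp (Term.imp t u) (Term.imp (Term.or s t) u)))
  | exfalso (s t u : Term) : HilbertAxT s t u (Term.imp Term.bot s)

/-- Theorems of ATM: the axioms (logical axioms and nonlogical schemes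
(1)–(9)) closed under the three deduction rules (conjunction, modus
ponens, release). -/
inductive Thm (θ : ℕ → Sentence) : Sentence → Prop
  -- logical axioms: (M[s] ∧ M[t] ∧ M[u]) → A[Ȧ(s,t,u)]
  | logical {s t u a : Term} (h : HilbertAxT s t u a) :
      Thm θ (Sentence.imp
        (Sentence.and (Sentence.and (Sentence.M s) (Sentence.M t)) (Sentence.M u))
        (Sentence.A a))
  -- (1) M[t] for t̂ grounded
  | ax1 {t : Term} (h : Grounded θ (t.eval θ)) : Thm θ (Sentence.M t)
  -- (2) (M[s] ∧ M[t]) ↔ M[s ∧̇ t] ↔ M[s ∨̇ t] ↔ M[s →̇ t]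
  | ax2and (s t : Term) :
      Thm θ (Sentence.iff (Sentence.and (Sentence.M s) (Sentence.M t))
        (Sentence.M (Term.and s t)))
  | ax2or (s t : Term) :
      Thm θ (Sentence.iff (Sentence.and (Sentence.M s) (Sentence.M t))
        (Sentence.M (Term.or s t)))
  | ax2imp (s t : Term) :
      Thm θ (Sentence.iff (Sentence.and (Sentence.M s) (Sentence.M t))
        (Sentence.M (Term.imp s t)))
  -- (3) A[t] → M[t]
  | ax3 (t : Term) : Thm θ (Sentence.imp (Sentence.A t) (Sentence.M t))
  -- (4) (A[s] ∧ A[t]) → A[s ∧̇ t]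
  | ax4 (s t : Term) :
      Thm θ (Sentence.imp (Sentence.and (Sentence.A s) (Sentence.A t))
        (Sentence.A (Term.and s t)))
  -- (5) (A[s] ∧ A[s →̇ t]) → A[t]
  | ax5 (s t : Term) :
      Thm θ (Sentence.imp (Sentence.and (Sentence.A s) (Sentence.A (Term.imp s t)))
        (Sentence.A t))
  -- (6) M[t] → A[t →̇ Ȧ[t]]
  | ax6 (t : Term) :
      Thm θ (Sentence.imp (Sentence.M t) (Sentence.A (Term.imp t (Term.A t))))
  -- (7) M[t] → A[t ↔̇ Ṫ[t]]
  | ax7 (t : Term) :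
      Thm θ (Sentence.imp (Sentence.M t) (Sentence.A (Term.iff t (Term.T t))))
  -- (8) ¬M[t] → A[¬̇Ṫ[t]]
  | ax8 (t : Term) :
      Thm θ (Sentence.imp (Sentence.neg (Sentence.M t))
        (Sentence.A (Term.neg (Term.T t))))
  -- (9) M[t] → A[t ↔̇ t'] whenever t̂ = t̂'
  | ax9 {t t' : Term} (h : t.eval θ = t'.eval θ) :
      Thm θ (Sentence.imp (Sentence.M t) (Sentence.A (Term.iff t t')))
  -- deduction rules
  | conj {φ ψ : Sentence} : Thm θ φ → Thm θ ψ → Thm θ (Sentence.and φ ψ)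
  | mp {φ ψ : Sentence} : Thm θ φ → Thm θ (Sentence.imp φ ψ) → Thm θ ψ
  | release {t : Term} : Thm θ (Sentence.A t) → Thm θ (t.eval θ)

/-- θ₁ is the classical liar sentence ¬T[L₁]. -/
def liar1 : Sentence := Sentence.neg (Sentence.T (Term.L 1))

/-- θ₂ is the assertible liar sentence ¬A[L₂]. -/
def liar2 : Sentence := Sentence.neg (Sentence.A (Term.L 2))

/-- Object-level modus ponens inside A, via axiom (5). -/
lemma Thm.amp {θ : ℕ → Sentence} {s t : Term}
    (hst : Thm θ (Sentence.A (Term.imp s t))) (hs : Thm θ (Sentence.A s)) :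
    Thm θ (Sentence.A t) :=
  Thm.mp (Thm.conj hs hst) (Thm.ax5 s t)

/-- Assertibility of a Hilbert axiom instance from mentionability of its parameters. -/
lemma Thm.hilb {θ : ℕ → Sentence} {s t u a : Term} (h : HilbertAxT s t u a)
    (hs : Thm θ (Sentence.M s)) (ht : Thm θ (Sentence.M t)) (hu : Thm θ (Sentence.M u)) :
    Thm θ (Sentence.A a) :=
  Thm.mp (Thm.conj (Thm.conj hs ht) hu) (Thm.logical h)

/-- Object-level composition of assertible implications. -/
lemma Thm.comp {θ : ℕ → Sentence} {x y z : Term}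
    (hMx : Thm θ (Sentence.M x)) (hMy : Thm θ (Sentence.M y)) (hMz : Thm θ (Sentence.M z))
    (hMyz : Thm θ (Sentence.M (Term.imp y z))) (hMbot : Thm θ (Sentence.M Term.bot))
    (hyz : Thm θ (Sentence.A (Term.imp y z))) (hxy : Thm θ (Sentence.A (Term.imp x y))) :
    Thm θ (Sentence.A (Term.imp x z)) := by
  have s1 : Thm θ (Sentence.A (Term.imp (Term.imp y z) (Term.imp x (Term.imp y z)))) :=
    Thm.hilb (HilbertAxT.imp1 (Term.imp y z) x Term.bot) hMyz hMx hMbot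
  have s2 : Thm θ (Sentence.A (Term.imp x (Term.imp y z))) := s1.amp hyz
  have s3 : Thm θ (Sentence.A (Term.imp (Term.imp x (Term.imp y z))
      (Term.imp (Term.imp x y) (Term.imp x z)))) :=
    Thm.hilb (HilbertAxT.imp2 x y z) hMx hMy hMz
  exact (s3.amp s2).amp hxy

theorem atm_proves_not_assert_liar_implies_assert_falsum (θ : ℕ → Sentence)
    (h1 : θ 1 = liar1) (h2 : θ 2 = liar2) :
    Thm θ (Sentence.imp (Sentence.neg (Sentence.A (Term.L 2))) (Sentence.A Term.bot)) := by
  set ℓ : Term := Term.L 2 with hℓ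
  set a : Term := Term.A ℓ with ha
  set na : Term := Term.imp a Term.bot with hna
  -- evaluation facts
  have evℓ : ℓ.eval θ = Sentence.imp (Sentence.A ℓ) Sentence.bot := by
    simp [hℓ, Term.eval, h2, liar2, Sentence.neg]
  have evna : na.eval θ = Sentence.imp (Sentence.A ℓ) Sentence.bot := rfl
  -- groundedness / mentionability facts
  have gbot : Grounded θ (Term.eval θ Term.bot) := Grounded.bot
  have gℓ : Grounded θ (ℓ.eval θ) := by
    rw [evℓ]; exact Grounded.imp (Grounded.A ℓ) Grounded.bot
  have ga : Grounded θ (a.eval θ) := Grounded.A ℓ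
  have gna : Grounded θ (na.eval θ) := Grounded.imp (Grounded.A ℓ) Grounded.bot
  have Mbot : Thm θ (Sentence.M Term.bot) := Thm.ax1 gbot
  have Mℓ : Thm θ (Sentence.M ℓ) := Thm.ax1 gℓ
  have Ma : Thm θ (Sentence.M a) := Thm.ax1 ga
  have Mna : Thm θ (Sentence.M na) := Thm.ax1 gna
  have Mℓna : Thm θ (Sentence.M (Term.imp ℓ na)) :=
    Thm.ax1 (Grounded.imp gℓ gna)
  have Mnaℓ : Thm θ (Sentence.M (Term.imp na ℓ)) :=
    Thm.ax1 (Grounded.imp gna gℓ)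
  have Mℓbot : Thm θ (Sentence.M (Term.imp ℓ Term.bot)) :=
    Thm.ax1 (Grounded.imp gℓ gbot)
  have MAbot : Thm θ (Sentence.M (Term.A Term.bot)) :=
    Thm.ax1 (Grounded.A Term.bot)
  have MbotAbot : Thm θ (Sentence.M (Term.imp Term.bot (Term.A Term.bot))) :=
    Thm.ax1 (Grounded.imp gbot (Grounded.A Term.bot))
  -- axiom (9): A[ℓ ↔̇ ¬̇Ȧ[ℓ]]
  have heq : ℓ.eval θ = na.eval θ := by rw [evℓ, evna]
  have h9 : Thm θ (Sentence.A (Term.iff ℓ na)) := Thm.mp Mℓ (Thm.ax9 heq)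
  -- extract the two implications
  have e1 : Thm θ (Sentence.A (Term.imp ℓ na)) :=
    (Thm.hilb (HilbertAxT.andE1 (Term.imp ℓ na) (Term.imp na ℓ) Term.bot)
      Mℓna Mnaℓ Mbot).amp h9
  have e2 : Thm θ (Sentence.A (Term.imp na ℓ)) :=
    (Thm.hilb (HilbertAxT.andE2 (Term.imp ℓ na) (Term.imp na ℓ) Term.bot)
      Mℓna Mnaℓ Mbot).amp h9
  -- axiom (6): A[ℓ →̇ Ȧ[ℓ]]
  have h6 : Thm θ (Sentence.A (Term.imp ℓ a)) := Thm.mp Mℓ (Thm.ax6 ℓ)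
  -- derive A[ℓ →̇ ⊥̇]
  have s3 : Thm θ (Sentence.A (Term.imp (Term.imp ℓ (Term.imp a Term.bot))
      (Term.imp (Term.imp ℓ a) (Term.imp ℓ Term.bot)))) :=
    Thm.hilb (HilbertAxT.imp2 ℓ a Term.bot) Mℓ Ma Mbot
  have s5 : Thm θ (Sentence.A (Term.imp ℓ Term.bot)) := (s3.amp e1).amp h6
  -- derive A[¬̇Ȧ[ℓ] →̇ ⊥̇]
  have s6 : Thm θ (Sentence.A (Term.imp na Term.bot)) :=
    Thm.comp Mna Mℓ Mbot Mℓbot Mbot s5 e2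
  -- axiom (6) at ⊥̇ and compose: A[¬̇Ȧ[ℓ] →̇ Ȧ[⊥̇]]
  have h6b : Thm θ (Sentence.A (Term.imp Term.bot (Term.A Term.bot))) :=
    Thm.mp Mbot (Thm.ax6 Term.bot)
  have s7 : Thm θ (Sentence.A (Term.imp na (Term.A Term.bot))) :=
    Thm.comp Mna Mbot MAbot MbotAbot Mbot h6b s6
  -- release
  have := Thm.release s7
  simpa [Term.eval, Sentence.neg, hna, ha, hℓ] using this

end ATM
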